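/- arXiv:2208.04845 — 2 statements merged into one kernel-verified Lean document; each statement's English description precedes it below -/
import Mathlib

section
/- Let r ≥ 1. For x ∈ ℝ with |x| ≤ r, let P_x denote the distribution of the ternary quantizer output: P_x({r·sign(x)}) = |x|/r and P_x({0}) = 1 - |x|/r (with the remaining level having probability 0). Then for all x, y with |x| ≤ r, |y| ≤ r, and |x - y| ≤ 1, and all subsets S of {-r, 0, r}, we have |P_x(S) - P_y(S)| ≤ 1/r. That is, the ternary quantizer is (0, 1/r)-differentially private. -/
/-- `(0, 1/r)`-differential privacy of the ternary quantizer. The three output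
levels `-r, 0, r` are indexed by `Fin 3` via `lev 0 = -r`, `lev 1 = 0`,
`lev 2 = r`, and the output distribution on input `x` with `|x| ≤ r` is
`p x 0 = max (-x) 0 / r`, `p x 1 = 1 - |x|/r`, `p x 2 = max x 0 / r`
(i.e. probability `|x|/r` on level `r * sign x` and `1 - |x|/r` on `0`).
For all inputs `x, y` with `|x - y| ≤ 1` and every subset `S` of the levels,
the output probabilities differ by at most `1/r`. -/
theorem ternary_quantizer_differential_privacy
    (r : ℝ) (hr : 1 ≤ r)
    (p : ℝ → Fin 3 → ℝ)
    (hp : ∀ x, p x 0 = max (-x) 0 / r ∧ p x 1 = 1 - |x| / r ∧ p x 2 = max x 0 / r)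
    (x y : ℝ) (hx : |x| ≤ r) (hy : |y| ≤ r) (hxy : |x - y| ≤ 1)
    (S : Finset (Fin 3)) :
    |(∑ q ∈ S, p x q) - (∑ q ∈ S, p y q)| ≤ 1 / r := by
  have hr0 : (0 : ℝ) < r := lt_of_lt_of_le one_pos hr
  obtain ⟨hx0, hx1, hx2⟩ := hp x
  obtain ⟨hy0, hy1, hy2⟩ := hp y
  set a := max (-x) 0 with ha
  set b := max x 0 with hb
  set c := max (-y) 0 with hc
  set d := max y 0 with hd
  have h2 : |b - d| ≤ 1 := le_trans (abs_max_sub_max_le_abs x y 0) hxy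
  have h0 : |a - c| ≤ 1 := by
    have := abs_max_sub_max_le_abs (-x) (-y) 0
    refine le_trans this ?_
    rwa [neg_sub_neg, abs_sub_comm]
  have h1 : |(|x| - |y|)| ≤ 1 := le_trans (abs_abs_sub_abs_le_abs_sub x y) hxy
  have hsx : a + b = |x| := by
    rcases le_total x 0 with h | h
    · rw [ha, hb, max_eq_left (neg_nonneg.mpr h), max_eq_right h, abs_of_nonpos h]; ring
    · rw [ha, hb, max_eq_right (neg_nonpos.mpr h), max_eq_left h, abs_of_nonneg h]; ring
  have hsy : c + d = |y| := by
    rcases le_total y 0 with h | h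
    · rw [hc, hd, max_eq_left (neg_nonneg.mpr h), max_eq_right h, abs_of_nonpos h]; ring
    · rw [hc, hd, max_eq_right (neg_nonpos.mpr h), max_eq_left h, abs_of_nonneg h]; ring
  have key : ∀ u v : ℝ, |u - v| ≤ 1 → -(1/r) ≤ u/r - v/r ∧ u/r - v/r ≤ 1/r := by
    intro u v h
    rcases abs_le.1 h with ⟨h₁, h₂⟩
    rw [div_sub_div_same]
    constructor
    · rw [← neg_div]
      gcongr
    · gcongr
  obtain ⟨e0l, e0r⟩ := key a c h0
  obtain ⟨e1l, e1r⟩ := key (|x|) (|y|) h1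
  obtain ⟨e2l, e2r⟩ := key b d h2
  have hsx' : a / r + b / r = |x| / r := by rw [← add_div, hsx]
  have hsy' : c / r + d / r = |y| / r := by rw [← add_div, hsy]
  have hinv : (0:ℝ) < 1 / r := by positivity
  fin_cases S <;>
    simp only [Finset.sum_mk, Multiset.map_coe, Multiset.sum_coe, List.map_cons, List.map_nil,
      List.sum_cons, List.sum_nil, Finset.sum_empty, Fin.mk_zero, Fin.mk_one, Fin.reduceFinMk, hx0, hx1, hx2, hy0, hy1, hy2] <;>
    rw [abs_le] <;> constructor <;> linarith
end

section
/- Let {v^k} be a nonnegative real sequence satisfying v^{k+1} ≤ (1 - r₁^k) v^k + r₂^k for all k ≥ 0, where C₁/(C₃k+1)^{γ₁} ≤ r₁^k ≤ 1 and 0 ≤ r₂^k ≤ C₂/(C₃k+1)^{γ₂} for constants C₁, C₂, C₃ > 0, 0 ≤ γ₁ < 1, and γ₁ < γ₂. Then for every 0 ≤ γ₀ < γ₂ − γ₁, lim_{k→∞} (k+1)^{γ₀} v^k = 0. -/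
open Real Filter

lemma pd_step_bound (γ : ℝ) (hγ : 0 ≤ γ) (a : ℝ) (ha : 1 ≤ a) :
    (a + 1) ^ γ - a ^ γ ≤ γ * 2 ^ γ * a ^ (γ - 1) := by
  have ha0 : (0:ℝ) < a := lt_of_lt_of_le one_pos ha
  rcases le_total γ 1 with h1 | h1
  · -- (1 + 1/a)^γ ≤ 1 + γ/a
    have hs : (-1:ℝ) ≤ 1 / a := by
      have h0 : (0:ℝ) ≤ 1/a := by positivity
      linarith
    have hb := rpow_one_add_le_one_add_mul_self hs hγ h1
    -- (1 + 1/a)^γ ≤ 1 + γ * (1/a)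
    have he : (a + 1) ^ γ = a ^ γ * (1 + 1/a) ^ γ := by
      rw [← Real.mul_rpow ha0.le (by positivity)]
      rw [mul_add, mul_one_div, div_self (ne_of_gt ha0), mul_one]
    have haγ : 0 < a ^ γ := rpow_pos_of_pos ha0 γ
    have ham : a ^ (γ - 1) = a ^ γ / a := by
      rw [Real.rpow_sub ha0, Real.rpow_one]
    have h2 : (1:ℝ) ≤ 2 ^ γ := Real.one_le_rpow one_le_two hγ
    have : (a + 1) ^ γ ≤ a ^ γ * (1 + γ * (1/a)) :=
      he ▸ mul_le_mul_of_nonneg_left hb haγ.le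
    have : (a + 1) ^ γ - a ^ γ ≤ γ * a ^ (γ - 1) := by
      rw [ham]
      calc (a+1)^γ - a^γ ≤ a ^ γ * (1 + γ * (1/a)) - a ^ γ := by linarith
        _ = γ * (a ^ γ / a) := by field_simp; ring
    calc (a + 1) ^ γ - a ^ γ ≤ γ * a ^ (γ - 1) := this
      _ ≤ γ * 2 ^ γ * a ^ (γ - 1) := by
          nlinarith [rpow_pos_of_pos ha0 (γ-1), mul_nonneg hγ (rpow_pos_of_pos ha0 (γ-1)).le]
  · -- γ ≥ 1 case: a^γ ≥ (a+1)^γ (1 - γ/(a+1))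
    have hb0 : (0:ℝ) < a + 1 := by linarith
    have hs : (-1:ℝ) ≤ -(1/(a+1)) := by
      have : 1/(a+1) ≤ 1 := by rw [div_le_one hb0]; linarith
      linarith
    have hb := one_add_mul_self_le_rpow_one_add hs h1
    -- 1 + γ * (-(1/(a+1))) ≤ (1 - 1/(a+1))^γ
    have he : (1 + -(1/(a+1)))= a/(a+1) := by field_simp; ring
    have he2 : (a/(a+1)) ^ γ = a ^ γ / (a+1) ^ γ := Real.div_rpow ha0.le hb0.le γ
    have hbγ : 0 < (a+1) ^ γ := rpow_pos_of_pos hb0 γ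
    have h3 : (a+1)^γ * (1 + γ * -(1/(a+1))) ≤ a ^ γ := by
      rw [he, he2] at hb
      calc (a+1)^γ * (1 + γ * -(1/(a+1))) ≤ (a+1)^γ * (a ^ γ / (a+1)^γ) :=
            mul_le_mul_of_nonneg_left hb hbγ.le
        _ = a ^ γ := by field_simp
    -- so (a+1)^γ - a^γ ≤ γ * (a+1)^(γ-1)
    have h4 : (a + 1) ^ γ - a ^ γ ≤ γ * (a+1) ^ (γ - 1) := by
      have ham : (a+1) ^ (γ - 1) = (a+1) ^ γ / (a+1) := by
        rw [Real.rpow_sub hb0, Real.rpow_one]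
      rw [ham]
      have : (a+1)^γ * (1 + γ * -(1/(a+1))) = (a+1)^γ - γ * ((a+1)^γ/(a+1)) := by
        field_simp; ring
      linarith [this ▸ h3]
    -- (a+1)^(γ-1) ≤ 2^(γ-1) * a^(γ-1) ≤ 2^γ * a^(γ-1)
    have h5 : (a+1) ^ (γ-1) ≤ 2 ^ γ * a ^ (γ-1) := by
      have : a + 1 ≤ 2 * a := by linarith
      calc (a+1) ^ (γ-1) ≤ (2*a) ^ (γ-1) :=
            Real.rpow_le_rpow hb0.le this (by linarith)
        _ = 2 ^ (γ-1) * a ^ (γ-1) := Real.mul_rpow (by norm_num) ha0.le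
        _ ≤ 2 ^ γ * a ^ (γ-1) := by
            have := Real.rpow_le_rpow_of_exponent_le one_le_two (show γ - 1 ≤ γ by linarith)
            nlinarith [rpow_pos_of_pos ha0 (γ-1)]
    calc (a + 1) ^ γ - a ^ γ ≤ γ * (a+1) ^ (γ - 1) := h4
      _ ≤ γ * (2 ^ γ * a ^ (γ-1)) := mul_le_mul_of_nonneg_left h5 hγ
      _ = γ * 2 ^ γ * a ^ (γ-1) := by ring

/-- Polynomial decay lemma: if `v^{k+1} ≤ (1 - r₁^k) v^k + r₂^k` with
`C₁/(C₃k+1)^{γ₁}` ≤ r₁^k ≤ 1` and `0 ≤ r₂^k ≤ C₂/(C₃k+1)^{γ₂}`, where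
`C₁, C₂, C₃ > 0`, `0 ≤ γ₁ < 1`, `γ₁ < γ₂`, then `(k+1)^{γ₀} v^k → 0` for
every `0 ≤ γ₀ < γ₂ - γ₁`. -/
theorem polynomial_decay
    (v r₁ r₂ : ℕ → ℝ) (C₁ C₂ C₃ γ₁ γ₂ : ℝ)
    (hC₁ : 0 < C₁) (hC₂ : 0 < C₂) (hC₃ : 0 < C₃)
    (hγ₁0 : 0 ≤ γ₁) (hγ₁1 : γ₁ < 1) (hγ₁₂ : γ₁ < γ₂)
    (hv : ∀ k, 0 ≤ v k)
    (hr₁ : ∀ k : ℕ, C₁ / (C₃ * k + 1) ^ γ₁ ≤ r₁ k ∧ r₁ k ≤ 1)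
    (hr₂ : ∀ k : ℕ, 0 ≤ r₂ k ∧ r₂ k ≤ C₂ / (C₃ * k + 1) ^ γ₂)
    (hrec : ∀ k, v (k + 1) ≤ (1 - r₁ k) * v k + r₂ k) :
    ∀ γ₀ : ℝ, 0 ≤ γ₀ → γ₀ < γ₂ - γ₁ →
      Filter.Tendsto (fun k : ℕ => ((k : ℝ) + 1) ^ γ₀ * v k)
        Filter.atTop (nhds 0) := by
  intro γ₀ hγ₀0 hγ₀
  have hγ₂0 : 0 ≤ γ₂ := by linarith
  obtain ⟨γ, hγpos, hγγ₀, hγlt⟩ : ∃ γ : ℝ, 0 < γ ∧ γ₀ < γ ∧ γ + γ₁ < γ₂ :=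
    ⟨(γ₀ + (γ₂ - γ₁)) / 2, by constructor; · linarith
                              constructor <;> linarith⟩
  -- lower bound on r₁
  obtain ⟨c, hc0, hr₁'⟩ : ∃ c : ℝ, 0 < c ∧ ∀ k : ℕ, c / ((k:ℝ)+1) ^ γ₁ ≤ r₁ k := by
    set A := max C₃ 1 with hAdef
    have hA1 : (1:ℝ) ≤ A := le_max_right _ _
    have hA0 : (0:ℝ) < A := lt_of_lt_of_le one_pos hA1
    have hAC : C₃ ≤ A := le_max_left _ _
    refine ⟨C₁ / A ^ γ₁, div_pos hC₁ (rpow_pos_of_pos hA0 γ₁), fun k => ?_⟩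
    have hk0 : (0:ℝ) ≤ (k:ℝ) := Nat.cast_nonneg k
    have h1 : C₃ * (k:ℝ) + 1 ≤ A * ((k:ℝ)+1) := by nlinarith
    have h2 : (C₃ * (k:ℝ) + 1) ^ γ₁ ≤ (A * ((k:ℝ)+1)) ^ γ₁ :=
      Real.rpow_le_rpow (by positivity) h1 hγ₁0
    have h3 : (A * ((k:ℝ)+1)) ^ γ₁ = A ^ γ₁ * ((k:ℝ)+1) ^ γ₁ :=
      Real.mul_rpow hA0.le (by positivity)
    have h4 : C₁ / A ^ γ₁ / ((k:ℝ)+1) ^ γ₁ = C₁ / (A ^ γ₁ * ((k:ℝ)+1) ^ γ₁) :=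
      div_div _ _ _
    rw [h4, ← h3]
    refine le_trans ?_ (hr₁ k).1
    exact div_le_div_of_nonneg_left hC₁.le (rpow_pos_of_pos (by positivity) γ₁) h2
  -- upper bound on r₂
  obtain ⟨D, hD0, hr₂'⟩ : ∃ D : ℝ, 0 < D ∧ ∀ k : ℕ, r₂ k ≤ D / ((k:ℝ)+1) ^ γ₂ := by
    set B := min C₃ 1 with hBdef
    have hB0 : (0:ℝ) < B := lt_min hC₃ one_pos
    have hB1 : B ≤ 1 := min_le_right _ _
    have hBC : B ≤ C₃ := min_le_left _ _
    refine ⟨C₂ / B ^ γ₂, div_pos hC₂ (rpow_pos_of_pos hB0 γ₂), fun k => ?_⟩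
    have hk0 : (0:ℝ) ≤ (k:ℝ) := Nat.cast_nonneg k
    have h1 : B * ((k:ℝ)+1) ≤ C₃ * (k:ℝ) + 1 := by nlinarith
    have h2 : (B * ((k:ℝ)+1)) ^ γ₂ ≤ (C₃ * (k:ℝ) + 1) ^ γ₂ :=
      Real.rpow_le_rpow (by positivity) h1 hγ₂0
    have h3 : (B * ((k:ℝ)+1)) ^ γ₂ = B ^ γ₂ * ((k:ℝ)+1) ^ γ₂ :=
      Real.mul_rpow hB0.le (by positivity)
    have h4 : C₂ / B ^ γ₂ / ((k:ℝ)+1) ^ γ₂ = C₂ / (B ^ γ₂ * ((k:ℝ)+1) ^ γ₂) :=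
      div_div _ _ _
    rw [h4, ← h3]
    refine le_trans (hr₂ k).2 ?_
    exact div_le_div_of_nonneg_left hC₂.le (rpow_pos_of_pos (by positivity) γ₂) h2
  -- step bound constant
  obtain ⟨E, hE0, hEstep⟩ : ∃ E : ℝ, 0 ≤ E ∧
      ∀ a : ℝ, 1 ≤ a → (a + 1) ^ γ - a ^ γ ≤ E * a ^ (γ - 1) :=
    ⟨γ * 2 ^ γ, mul_nonneg hγpos.le (rpow_pos_of_pos two_pos γ).le,
      fun a ha => pd_step_bound γ hγpos.le a ha⟩
  -- choose K₀
  have htop : Tendsto (fun k : ℕ => ((k:ℝ)+1) ^ (1-γ₁)) atTop atTop := by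
    have h1 : Tendsto (fun k : ℕ => (k:ℝ)+1) atTop atTop :=
      tendsto_atTop_add_const_right _ 1 tendsto_natCast_atTop_atTop
    exact (tendsto_rpow_atTop (by linarith)).comp h1
  obtain ⟨K₀, hK₀⟩ := Filter.eventually_atTop.mp (htop.eventually_ge_atTop (2*E/c))
  -- define M
  obtain ⟨M, hM0, hMD, hMj⟩ : ∃ M : ℝ, 0 < M ∧ 2*D ≤ c*M ∧
      ∀ j ≤ K₀, v j * ((j:ℝ)+1) ^ γ ≤ M := by
    refine ⟨2*D/c + ∑ j ∈ Finset.range (K₀+1), v j * ((j:ℝ)+1) ^ γ, ?_, ?_, ?_⟩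
    · have h1 : (0:ℝ) < 2*D/c := by positivity
      have h2 : (0:ℝ) ≤ ∑ j ∈ Finset.range (K₀+1), v j * ((j:ℝ)+1) ^ γ :=
        Finset.sum_nonneg (fun i _ => mul_nonneg (hv i) (by positivity))
      linarith
    · have h2 : (0:ℝ) ≤ ∑ j ∈ Finset.range (K₀+1), v j * ((j:ℝ)+1) ^ γ :=
        Finset.sum_nonneg (fun i _ => mul_nonneg (hv i) (by positivity))
      have h3 : 2*D/c ≤ 2*D/c + ∑ j ∈ Finset.range (K₀+1), v j * ((j:ℝ)+1) ^ γ := by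
        linarith
      calc 2*D = c * (2*D/c) := by field_simp
        _ ≤ c * (2*D/c + ∑ j ∈ Finset.range (K₀+1), v j * ((j:ℝ)+1) ^ γ) :=
            mul_le_mul_of_nonneg_left h3 hc0.le
    · intro j hj
      have hmem : j ∈ Finset.range (K₀+1) := Finset.mem_range.mpr (by omega)
      have h : v j * ((j:ℝ)+1) ^ γ ≤ ∑ i ∈ Finset.range (K₀+1), v i * ((i:ℝ)+1) ^ γ :=
        Finset.single_le_sum (f := fun i => v i * ((i:ℝ)+1) ^ γ)
          (fun i _ => mul_nonneg (hv i) (by positivity)) hmem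
      have h2 : (0:ℝ) ≤ 2*D/c := by positivity
      linarith
  -- main claim
  have claim : ∀ k : ℕ, v k ≤ M / ((k:ℝ)+1) ^ γ := by
    intro k
    induction k with
    | zero => simpa using hMj 0 (Nat.zero_le _)
    | succ k ih =>
      by_cases hk : k + 1 ≤ K₀
      · have h := hMj (k+1) hk
        rw [le_div_iff₀ (by positivity)]
        exact h
      · have hkK : K₀ ≤ k := by omega
        push_cast
        have ha1 : (1:ℝ) ≤ (k:ℝ)+1 := by
          have := Nat.cast_nonneg (α := ℝ) k; linarith
        set a : ℝ := (k:ℝ)+1 with hadef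
        clear_value a
        have ha0 : (0:ℝ) < a := lt_of_lt_of_le one_pos ha1
        have haγ : 0 < a ^ γ := rpow_pos_of_pos ha0 γ
        have haγ₁ : 0 < a ^ γ₁ := rpow_pos_of_pos ha0 γ₁
        have haγ₂ : 0 < a ^ γ₂ := rpow_pos_of_pos ha0 γ₂
        have hb0 : (0:ℝ) < a + 1 := by linarith
        have hbγ : 0 < (a+1) ^ γ := rpow_pos_of_pos hb0 γ
        -- the K₀ condition
        have hKc : E * a ^ γ₁ ≤ c/2 * a := by
          have h' := hK₀ k hkK
          rw [div_le_iff₀ hc0] at h'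
          rw [← hadef] at h'
          have h'' : 2*E ≤ c * a ^ (1-γ₁) := by nlinarith [h']
          have h3 := mul_le_mul_of_nonneg_right h'' haγ₁.le
          have hsum : a ^ (1-γ₁) * a ^ γ₁ = a := by
            rw [← Real.rpow_add ha0]; norm_num
          have h4 : c * a ^ (1-γ₁) * a ^ γ₁ = c * a := by rw [mul_assoc, hsum]
          nlinarith [h3]
        -- recursion chain
        have step1 := hrec k
        have step2 : (1 - r₁ k) * v k ≤ (1 - r₁ k) * (M / a ^ γ) :=
          mul_le_mul_of_nonneg_left ih (by linarith [(hr₁ k).2])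
        have step3 : (1 - r₁ k) * (M / a ^ γ) ≤ (1 - c / a ^ γ₁) * (M / a ^ γ) := by
          have h := hr₁' k
          rw [← hadef] at h
          exact mul_le_mul_of_nonneg_right (by linarith) (by positivity)
        have step4 : r₂ k ≤ D / a ^ γ₂ := by
          have h := hr₂' k
          rw [← hadef] at h
          exact h
        -- key inequality
        have e0 : (1 - c / a ^ γ₁) * (M / a ^ γ) = M / a ^ γ - c*M / (a ^ γ * a ^ γ₁) := by
          field_simp
        have II : D / a ^ γ₂ ≤ (c*M/2) / (a ^ γ * a ^ γ₁) := by
          have hexp : a ^ γ * a ^ γ₁ ≤ a ^ γ₂ := by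
            rw [← Real.rpow_add ha0]
            exact Real.rpow_le_rpow_of_exponent_le ha1 hγlt.le
          exact div_le_div₀ (by positivity) (by linarith) (by positivity) hexp
        have I : M / a ^ γ - M / (a+1) ^ γ ≤ (c*M/2) / (a ^ γ * a ^ γ₁) := by
          have hd : M / a ^ γ - M / (a+1) ^ γ
              = M * ((a+1) ^ γ - a ^ γ) / (a ^ γ * (a+1) ^ γ) := by
            field_simp
          have hstep : (a+1) ^ γ - a ^ γ ≤ E * a ^ (γ-1) := hEstep a ha1
          have hab : a ^ γ ≤ (a+1) ^ γ :=
            Real.rpow_le_rpow ha0.le (by linarith) hγpos.le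
          have h1 : M * ((a+1) ^ γ - a ^ γ) / (a ^ γ * (a+1) ^ γ)
              ≤ M * (E * a ^ (γ-1)) / (a ^ γ * a ^ γ) :=
            div_le_div₀ (by positivity)
              (mul_le_mul_of_nonneg_left hstep hM0.le) (by positivity)
              (mul_le_mul_of_nonneg_left hab haγ.le)
          have h2 : M * (E * a ^ (γ-1)) / (a ^ γ * a ^ γ)
              ≤ (c*M/2) / (a ^ γ * a ^ γ₁) := by
            rw [div_le_div_iff₀ (by positivity) (by positivity)]
            have haa : a ^ (γ-1) * a = a ^ γ := by
              rw [← Real.rpow_add_one (ne_of_gt ha0)]; norm_num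
            have hP : (0:ℝ) ≤ M * a ^ (γ-1) * a ^ γ := by positivity
            calc M * (E * a ^ (γ-1)) * (a ^ γ * a ^ γ₁)
                = (M * a ^ (γ-1) * a ^ γ) * (E * a ^ γ₁) := by ring
              _ ≤ (M * a ^ (γ-1) * a ^ γ) * (c/2 * a) :=
                  mul_le_mul_of_nonneg_left hKc hP
              _ = c*M/2 * (a ^ γ * (a ^ (γ-1) * a)) := by ring
              _ = c*M/2 * (a ^ γ * a ^ γ) := by rw [haa]
          rw [hd]; linarith
        have key : (1 - c / a ^ γ₁) * (M / a ^ γ) + D / a ^ γ₂ ≤ M / (a+1) ^ γ := by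
          have hhalf : c*M/2 / (a ^ γ * a ^ γ₁) + c*M/2 / (a ^ γ * a ^ γ₁)
              = c*M / (a ^ γ * a ^ γ₁) := by ring
          rw [e0]; linarith
        calc v (k+1) ≤ (1 - r₁ k) * v k + r₂ k := step1
          _ ≤ (1 - c / a ^ γ₁) * (M / a ^ γ) + D / a ^ γ₂ := by linarith
          _ ≤ M / (a+1) ^ γ := key
  -- conclude
  have hbound : ∀ k : ℕ, ((k:ℝ)+1) ^ γ₀ * v k ≤ M * ((k:ℝ)+1) ^ (γ₀-γ) := by
    intro k
    have ha0 : (0:ℝ) < (k:ℝ)+1 := by positivity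
    calc ((k:ℝ)+1) ^ γ₀ * v k ≤ ((k:ℝ)+1) ^ γ₀ * (M / ((k:ℝ)+1) ^ γ) :=
          mul_le_mul_of_nonneg_left (claim k) (rpow_nonneg ha0.le γ₀)
      _ = M * ((k:ℝ)+1) ^ (γ₀-γ) := by rw [Real.rpow_sub ha0]; ring
  have hg : Tendsto (fun k : ℕ => M * ((k:ℝ)+1) ^ (γ₀-γ)) atTop (nhds 0) := by
    have h1 : Tendsto (fun k : ℕ => (k:ℝ)+1) atTop atTop :=
      tendsto_atTop_add_const_right _ 1 tendsto_natCast_atTop_atTop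
    have h2 : Tendsto (fun k : ℕ => ((k:ℝ)+1) ^ (γ₀-γ)) atTop (nhds 0) := by
      have h3 := (tendsto_rpow_neg_atTop (show 0 < γ-γ₀ by linarith)).comp h1
      have he : γ₀ - γ = -(γ-γ₀) := by ring
      rw [he]
      exact h3
    simpa using h2.const_mul M
  exact squeeze_zero
    (fun k => mul_nonneg (rpow_nonneg (by positivity) γ₀) (hv k)) hbound hg
end
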